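/- Let γ : [0,1] → ℂ be a continuously differentiable path (the contour C) with endpoints A = γ(0), B = γ(1). Let f : ℂ → ℂ be holomorphic and for u ∈ ℝ define f_u(α) := f(α + iu), so that ∂f_u/∂u = i·f_u'. Let R : ℂ × ℂ → ℂ be continuous, and let D₋, D₊ : ℂ → ℂ be differentiable along C with ∂D₋/∂α(α) = R(α,A)·D₋(A) − R(α,B)·D₋(B) and ∂D₊/∂α(α) = −R(α,B)·(1 + D₊(B)) − R(α,A)·(1 − D₊(A)) for all α. Define G_H(u) := −2i·∫_C f_u'(α)·D₋(α) dα, G_q(u) := (1/2)·(f_u(B) + f_u(A)) + (1/2)·∫_C f_u'(α)·D₊(α) dα, ξ(u) := 2πi·( f_u'(B) + ∫_C f_u'(α)·R(α,B) dα ), and ξ̃(u) := 2πi·( f_u'(A) + ∫_C f_u'(α)·R(α,A) dα ). Then: G_H'(u) = −(i/π)·( D₋(B)·ξ(u) − D₋(A)·ξ̃(u) ) and G_q'(u) = (1/(4π))·( (1 + D₊(B))·ξ(u) + (1 − D₊(A))·ξ̃(u) ). -/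

import Mathlib

/-- Contour integral of `f` along the path `γ : [0,1] → ℂ`:
`∫_C f(β) dβ := ∫₀¹ f(γ(t)) γ'(t) dt`. -/
noncomputable def cInt (γ : ℝ → ℂ) (f : ℂ → ℂ) : ℂ :=
  ∫ t in (0:ℝ)..1, f (γ t) * deriv γ t

lemma line_hasDerivAt (c : ℂ) (x : ℝ) :
    HasDerivAt (fun v : ℝ => c + Complex.I * (v : ℂ)) Complex.I x := by
  have h0 : HasDerivAt (fun v : ℝ => (v : ℂ)) 1 x := by
    simpa using (hasDerivAt_id x).ofReal_comp
  have h1 := h0.const_mul Complex.I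
  simpa using h1.const_add c

lemma comp_aux {g : ℂ → ℂ} (hg : Differentiable ℂ g) {w : ℝ → ℂ} {w' : ℂ} {x : ℝ}
    (hw : HasDerivAt w w' x) :
    HasDerivAt (fun v => g (w v)) (w' * deriv g (w x)) x := by
  have h2 : HasDerivAt (g ∘ w) (w' • deriv g (w x)) x :=
    HasDerivAt.scomp (𝕜 := ℝ) (𝕜' := ℂ) (x := x) (hg (w x)).hasDerivAt hw
  simpa [Function.comp_def, smul_eq_mul] using h2

lemma entire_deriv {g : ℂ → ℂ} (hg : Differentiable ℂ g) : Differentiable ℂ (deriv g) :=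
  (contDiff_infty_iff_deriv.mp (hg.contDiff)).2.differentiable (by simp)

/-- Key: derivative in `u` of `∫₀¹ f'(γ t + iu) h(γ t) γ'(t) dt`, combined with
integration by parts along the contour. -/
lemma key_hasDerivAt (γ : ℝ → ℂ) (hγ : ContDiff ℝ 1 γ) (f h : ℂ → ℂ)
    (hf : Differentiable ℂ f) (hh : Differentiable ℂ h) (u : ℝ) :
    HasDerivAt
      (fun v : ℝ => ∫ t in (0:ℝ)..1,
        deriv f (γ t + Complex.I * (v : ℂ)) * h (γ t) * deriv γ t)
      (Complex.I * (deriv f (γ 1 + Complex.I * (u : ℂ)) * h (γ 1)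
        - deriv f (γ 0 + Complex.I * (u : ℂ)) * h (γ 0)
        - ∫ t in (0:ℝ)..1,
            deriv f (γ t + Complex.I * (u : ℂ)) * deriv h (γ t) * deriv γ t)) u := by
  have hγc : Continuous γ := hγ.continuous
  have hγd : Differentiable ℝ γ := hγ.differentiable one_ne_zero
  have hγ'c : Continuous (deriv γ) := hγ.continuous_deriv le_rfl
  have hf' : Differentiable ℂ (deriv f) := entire_deriv hf
  have hf'' : Differentiable ℂ (deriv (deriv f)) := entire_deriv hf'
  have hh' : Differentiable ℂ (deriv h) := entire_deriv hh
  set F : ℝ → ℝ → ℂ := fun v t => deriv f (γ t + Complex.I * (v : ℂ)) * h (γ t) * deriv γ t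
    with hF
  set F' : ℝ → ℝ → ℂ :=
    fun v t => (Complex.I * deriv (deriv f) (γ t + Complex.I * (v : ℂ))) * h (γ t) * deriv γ t
    with hF'
  have hzc : ∀ v : ℝ, Continuous fun t => γ t + Complex.I * (v : ℂ) := fun v =>
    hγc.add continuous_const
  have hFc : ∀ v : ℝ, Continuous (F v) := fun v =>
    ((hf'.continuous.comp (hzc v)).mul (hh.continuous.comp hγc)).mul hγ'c
  have hF'c : ∀ v : ℝ, Continuous (F' v) := fun v =>
    (((continuous_const.mul (hf''.continuous.comp (hzc v)))).mul
      (hh.continuous.comp hγc)).mul hγ'c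
  -- compact set and bound
  set K : Set ℂ := (fun p : ℝ × ℝ => γ p.1 + Complex.I * (p.2 : ℂ)) ''
      (Set.Icc 0 1 ×ˢ Set.Icc (u - 1) (u + 1)) with hKdef
  have hK : IsCompact K :=
    ((isCompact_Icc).prod isCompact_Icc).image
      ((hγc.comp continuous_fst).add
        (continuous_const.mul (Complex.continuous_ofReal.comp continuous_snd)))
  obtain ⟨C, hC⟩ := hK.exists_bound_of_continuousOn hf''.continuous.continuousOn
  have h_bound : ∀ᵐ t : ℝ, t ∈ Set.uIoc (0:ℝ) 1 → ∀ x ∈ Metric.ball u 1,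
      ‖F' x t‖ ≤ C * ‖h (γ t)‖ * ‖deriv γ t‖ := by
    refine Filter.Eventually.of_forall fun t ht x hx => ?_
    have hmem : γ t + Complex.I * (x : ℂ) ∈ K := by
      refine ⟨(t, x), ⟨?_, ?_⟩, rfl⟩
      · have ht' : t ∈ Set.Ioc (0:ℝ) 1 := by
          simpa [Set.uIoc_of_le (by norm_num : (0:ℝ) ≤ 1)] using ht
        exact ⟨le_of_lt ht'.1, ht'.2⟩
      · have := Metric.mem_ball.mp hx
        rw [Real.dist_eq] at this
        constructor <;> [linarith [neg_abs_le (x - u)]; linarith [le_abs_self (x - u)]]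
    have h1 : ‖F' x t‖ = ‖deriv (deriv f) (γ t + Complex.I * (x : ℂ))‖ * ‖h (γ t)‖ *
        ‖deriv γ t‖ := by
      simp [hF', norm_mul, Complex.norm_I]
    rw [h1]
    have hC' := hC _ hmem
    have h2 : (0:ℝ) ≤ ‖h (γ t)‖ := norm_nonneg _
    have h3 : (0:ℝ) ≤ ‖deriv γ t‖ := norm_nonneg _
    exact mul_le_mul_of_nonneg_right (mul_le_mul_of_nonneg_right hC' h2) h3
  have h_diff : ∀ᵐ t : ℝ, t ∈ Set.uIoc (0:ℝ) 1 → ∀ x ∈ Metric.ball u 1,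
      HasDerivAt (fun v => F v t) (F' x t) x := by
    refine Filter.Eventually.of_forall fun t _ x _ => ?_
    have hin := line_hasDerivAt (γ t) x
    have hcomp := comp_aux hf' hin
    have := (hcomp.mul_const (h (γ t))).mul_const (deriv γ t)
    simpa [hF, hF', mul_comm, mul_assoc, mul_left_comm] using this
  obtain ⟨-, hder⟩ :=
    intervalIntegral.hasDerivAt_integral_of_dominated_loc_of_deriv_le (μ := MeasureTheory.volume)
      (a := (0:ℝ)) (b := 1) (bound := fun t => C * ‖h (γ t)‖ * ‖deriv γ t‖)
      (Metric.ball_mem_nhds u one_pos)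
      (Filter.Eventually.of_forall fun x => ((hFc x).aestronglyMeasurable).restrict)
      ((hFc u).intervalIntegrable 0 1)
      ((hF'c u).aestronglyMeasurable).restrict
      h_bound
      (((continuous_const.mul (continuous_norm.comp (hh.continuous.comp hγc))).mul
        (continuous_norm.comp hγ'c)).intervalIntegrable 0 1)
      h_diff
  -- rewrite ∫ F' u  via FTC
  have hftc : ∫ t in (0:ℝ)..1, F' u t
      = Complex.I * (deriv f (γ 1 + Complex.I * (u : ℂ)) * h (γ 1)
        - deriv f (γ 0 + Complex.I * (u : ℂ)) * h (γ 0)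
        - ∫ t in (0:ℝ)..1,
            deriv f (γ t + Complex.I * (u : ℂ)) * deriv h (γ t) * deriv γ t) := by
    have hΦ : ∀ t ∈ Set.uIcc (0:ℝ) 1,
        HasDerivAt (fun s => deriv f (γ s + Complex.I * (u : ℂ)) * h (γ s))
          (deriv (deriv f) (γ t + Complex.I * (u : ℂ)) * h (γ t) * deriv γ t
            + deriv f (γ t + Complex.I * (u : ℂ)) * deriv h (γ t) * deriv γ t) t := by
      intro t _
      have hin : HasDerivAt (fun s => γ s + Complex.I * (u : ℂ)) (deriv γ t) t :=
        (hγd t).hasDerivAt.add_const _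
      have h1 := comp_aux hf' hin
      have h2 := comp_aux hh (hγd t).hasDerivAt
      have := h1.mul h2
      convert this using 1
      case e'_4 => rfl
      case e'_8 => rfl
      case e'_9 => ring
    have habc : IntervalIntegrable
        (fun t => deriv (deriv f) (γ t + Complex.I * (u : ℂ)) * h (γ t) * deriv γ t
          + deriv f (γ t + Complex.I * (u : ℂ)) * deriv h (γ t) * deriv γ t)
        MeasureTheory.volume 0 1 := by
      apply Continuous.intervalIntegrable
      exact (((hf''.continuous.comp (hzc u)).mul (hh.continuous.comp hγc)).mul hγ'c).add
        (((hf'.continuous.comp (hzc u)).mul (hh'.continuous.comp hγc)).mul hγ'c)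
    have hsub := intervalIntegral.integral_eq_sub_of_hasDerivAt hΦ habc
    have hsplit : (∫ t in (0:ℝ)..1,
        (deriv (deriv f) (γ t + Complex.I * (u : ℂ)) * h (γ t) * deriv γ t
          + deriv f (γ t + Complex.I * (u : ℂ)) * deriv h (γ t) * deriv γ t))
        = (∫ t in (0:ℝ)..1,
            deriv (deriv f) (γ t + Complex.I * (u : ℂ)) * h (γ t) * deriv γ t)
          + ∫ t in (0:ℝ)..1,
              deriv f (γ t + Complex.I * (u : ℂ)) * deriv h (γ t) * deriv γ t := by
      apply intervalIntegral.integral_add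
      · exact (((hf''.continuous.comp (hzc u)).mul (hh.continuous.comp hγc)).mul
          hγ'c).intervalIntegrable 0 1
      · exact (((hf'.continuous.comp (hzc u)).mul (hh'.continuous.comp hγc)).mul
          hγ'c).intervalIntegrable 0 1
    rw [hsplit] at hsub
    have hIF' : ∫ t in (0:ℝ)..1, F' u t
        = Complex.I * ∫ t in (0:ℝ)..1,
            deriv (deriv f) (γ t + Complex.I * (u : ℂ)) * h (γ t) * deriv γ t := by
      rw [← intervalIntegral.integral_const_mul]
      exact intervalIntegral.integral_congr fun t _ => by simp [hF']; ring
    rw [hIF']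
    have : (∫ t in (0:ℝ)..1,
        deriv (deriv f) (γ t + Complex.I * (u : ℂ)) * h (γ t) * deriv γ t)
        = deriv f (γ 1 + Complex.I * (u : ℂ)) * h (γ 1)
          - deriv f (γ 0 + Complex.I * (u : ℂ)) * h (γ 0)
          - ∫ t in (0:ℝ)..1,
              deriv f (γ t + Complex.I * (u : ℂ)) * deriv h (γ t) * deriv γ t := by
      linear_combination hsub
    rw [this]
  rw [hftc] at hder
  exact hder

theorem stmt_17 (γ : ℝ → ℂ) (hγ : ContDiff ℝ 1 γ)
    (A B : ℂ) (hA : A = γ 0) (hB : B = γ 1)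
    (f : ℂ → ℂ) (hf : Differentiable ℂ f)
    (R : ℂ → ℂ → ℂ) (hRc : Continuous fun p : ℂ × ℂ => R p.1 p.2)
    (Dm Dp : ℂ → ℂ)
    (hDmd : Differentiable ℂ Dm) (hDpd : Differentiable ℂ Dp)
    (hDm' : ∀ α : ℂ, deriv Dm α = R α A * Dm A - R α B * Dm B)
    (hDp' : ∀ α : ℂ, deriv Dp α = -R α B * (1 + Dp B) - R α A * (1 - Dp A))
    (GH Gq ξ ξt : ℝ → ℂ)
    (hGH : ∀ u : ℝ, GH u
      = -2 * Complex.I * cInt γ (fun α => deriv f (α + Complex.I * (u : ℂ)) * Dm α))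
    (hGq : ∀ u : ℝ, Gq u
      = (1 / 2) * (f (B + Complex.I * (u : ℂ)) + f (A + Complex.I * (u : ℂ)))
        + (1 / 2) * cInt γ (fun α => deriv f (α + Complex.I * (u : ℂ)) * Dp α))
    (hξ : ∀ u : ℝ, ξ u = 2 * (Real.pi : ℂ) * Complex.I *
      (deriv f (B + Complex.I * (u : ℂ))
        + cInt γ (fun α => deriv f (α + Complex.I * (u : ℂ)) * R α B)))
    (hξt : ∀ u : ℝ, ξt u = 2 * (Real.pi : ℂ) * Complex.I *
      (deriv f (A + Complex.I * (u : ℂ))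
        + cInt γ (fun α => deriv f (α + Complex.I * (u : ℂ)) * R α A))) :
    (∀ u : ℝ, deriv GH u
        = -(Complex.I / (Real.pi : ℂ)) * (Dm B * ξ u - Dm A * ξt u)) ∧
    (∀ u : ℝ, deriv Gq u
        = (1 / (4 * (Real.pi : ℂ))) * ((1 + Dp B) * ξ u + (1 - Dp A) * ξt u)) := by
  have hγc : Continuous γ := hγ.continuous
  have hγ'c : Continuous (deriv γ) := hγ.continuous_deriv le_rfl
  have hf' : Differentiable ℂ (deriv f) := entire_deriv hf
  have hπ : (Real.pi : ℂ) ≠ 0 := Complex.ofReal_ne_zero.mpr Real.pi_ne_zero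
  have hRA : Continuous fun z : ℂ => R z A := hRc.comp (continuous_id.prodMk continuous_const)
  have hRB : Continuous fun z : ℂ => R z B := hRc.comp (continuous_id.prodMk continuous_const)
  have hintA : ∀ u : ℝ, IntervalIntegrable
      (fun t => deriv f (γ t + Complex.I * (u : ℂ)) * R (γ t) A * deriv γ t)
      MeasureTheory.volume 0 1 :=
    fun u => (((hf'.continuous.comp (hγc.add continuous_const)).mul (hRA.comp hγc)).mul
      hγ'c).intervalIntegrable 0 1
  have hintB : ∀ u : ℝ, IntervalIntegrable
      (fun t => deriv f (γ t + Complex.I * (u : ℂ)) * R (γ t) B * deriv γ t)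
      MeasureTheory.volume 0 1 :=
    fun u => (((hf'.continuous.comp (hγc.add continuous_const)).mul (hRB.comp hγc)).mul
      hγ'c).intervalIntegrable 0 1
  constructor
  · intro u
    have hkey := key_hasDerivAt γ hγ f Dm hf hDmd u
    have hGHfun : GH = fun v : ℝ => -2 * Complex.I *
        ∫ t in (0:ℝ)..1, deriv f (γ t + Complex.I * (v : ℂ)) * Dm (γ t) * deriv γ t := by
      funext v; rw [hGH v]; simp only [cInt]
    have hd : deriv GH u = -2 * Complex.I *
        (Complex.I * (deriv f (γ 1 + Complex.I * (u : ℂ)) * Dm (γ 1)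
          - deriv f (γ 0 + Complex.I * (u : ℂ)) * Dm (γ 0)
          - ∫ t in (0:ℝ)..1,
              deriv f (γ t + Complex.I * (u : ℂ)) * deriv Dm (γ t) * deriv γ t)) := by
      rw [hGHfun]; exact (hkey.const_mul _).deriv
    have hrem : (∫ t in (0:ℝ)..1,
        deriv f (γ t + Complex.I * (u : ℂ)) * deriv Dm (γ t) * deriv γ t)
        = Dm A * cInt γ (fun α => deriv f (α + Complex.I * (u : ℂ)) * R α A)
          - Dm B * cInt γ (fun α => deriv f (α + Complex.I * (u : ℂ)) * R α B) := by
      simp only [cInt]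
      rw [← intervalIntegral.integral_const_mul, ← intervalIntegral.integral_const_mul,
        ← intervalIntegral.integral_sub ((hintA u).const_mul _) ((hintB u).const_mul _)]
      refine intervalIntegral.integral_congr fun t _ => ?_
      simp only [hDm']
      ring
    rw [hd, hrem, hξ, hξt]
    simp only [hA, hB]
    field_simp
    ring
  · intro u
    have hkey := key_hasDerivAt γ hγ f Dp hf hDpd u
    have hb1 : HasDerivAt (fun v : ℝ => f (γ 1 + Complex.I * (v : ℂ)))
        (Complex.I * deriv f (γ 1 + Complex.I * (u : ℂ))) u :=
      comp_aux hf (line_hasDerivAt (γ 1) u)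
    have ha1 : HasDerivAt (fun v : ℝ => f (γ 0 + Complex.I * (v : ℂ)))
        (Complex.I * deriv f (γ 0 + Complex.I * (u : ℂ))) u :=
      comp_aux hf (line_hasDerivAt (γ 0) u)
    have hGqfun : Gq = fun v : ℝ =>
        (1 / 2 : ℂ) * (f (γ 1 + Complex.I * (v : ℂ)) + f (γ 0 + Complex.I * (v : ℂ)))
        + (1 / 2 : ℂ) * ∫ t in (0:ℝ)..1,
            deriv f (γ t + Complex.I * (v : ℂ)) * Dp (γ t) * deriv γ t := by
      funext v; rw [hGq v]; simp only [cInt, hA, hB]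
    have htot := ((hb1.add ha1).const_mul ((1:ℂ)/2)).add (hkey.const_mul ((1:ℂ)/2))
    have hd : deriv Gq u
        = (1 / 2 : ℂ) * (Complex.I * deriv f (γ 1 + Complex.I * (u : ℂ))
            + Complex.I * deriv f (γ 0 + Complex.I * (u : ℂ)))
          + (1 / 2 : ℂ) * (Complex.I * (deriv f (γ 1 + Complex.I * (u : ℂ)) * Dp (γ 1)
            - deriv f (γ 0 + Complex.I * (u : ℂ)) * Dp (γ 0)
            - ∫ t in (0:ℝ)..1,
                deriv f (γ t + Complex.I * (u : ℂ)) * deriv Dp (γ t) * deriv γ t)) := by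
      rw [hGqfun]; exact htot.deriv
    have hrem : (∫ t in (0:ℝ)..1,
        deriv f (γ t + Complex.I * (u : ℂ)) * deriv Dp (γ t) * deriv γ t)
        = -(1 + Dp B) * cInt γ (fun α => deriv f (α + Complex.I * (u : ℂ)) * R α B)
          - (1 - Dp A) * cInt γ (fun α => deriv f (α + Complex.I * (u : ℂ)) * R α A) := by
      simp only [cInt]
      rw [← intervalIntegral.integral_const_mul, ← intervalIntegral.integral_const_mul,
        ← intervalIntegral.integral_sub ((hintB u).const_mul _) ((hintA u).const_mul _)]
      refine intervalIntegral.integral_congr fun t _ => ?_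
      simp only [hDp']
      ring
    rw [hd, hrem, hξ, hξt]
    simp only [hA, hB]
    field_simp
    ring
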